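/- Let 𝒜 ⊆ 𝒫(𝒢) be nonempty and define Ext(𝒜) by: B ∈ Ext(𝒜) iff there are A₁,…,Aₙ ∈ 𝒜 such that for each (g₁,…,gₙ) ∈ A₁×…×Aₙ, whenever 0 ∉ desext({g₁,…,gₙ}) there exists f ∈ B with f ∈ desext({g₁,…,gₙ}). If ∅ ∉ Ext(𝒜), then Ext(𝒜) is coherent. -/

import Mathlib

open scoped BigOperators

universe u v

def GambleSpace (Ω : Type v) : Submodule ℝ (Ω → ℝ) where
  carrier := {f | ∃ M, ∀ ω, |f ω| ≤ M}
  add_mem' := by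
    rintro f g ⟨M, hM⟩ ⟨N, hN⟩
    exact ⟨M + N, fun ω => (abs_add_le _ _).trans (add_le_add (hM ω) (hN ω))⟩
  zero_mem' := ⟨0, fun ω => by simp⟩
  smul_mem' := by
    rintro c f ⟨M, hM⟩
    exact ⟨|c| * M, fun ω => by
      simpa [abs_mul] using mul_le_mul_of_nonneg_left (hM ω) (abs_nonneg c)⟩

/-- The type of gambles: bounded functions `Ω → ℝ`. -/
abbrev Gamble (Ω : Type v) := GambleSpace Ω

/-- Pointwise order on gambles: `gle f g` means `f ≤ g` pointwise. -/
def gle {Ω : Type v} (f g : Gamble Ω) : Prop := ∀ ω, (f : Ω → ℝ) ω ≤ (g : Ω → ℝ) ω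

/-- Gambles weakly dominating `0`. -/
def Gpos (Ω : Type v) : Set (Gamble Ω) := {g | gle 0 g ∧ g ≠ 0}

/-- Positive linear hull: finite positive combinations of members of `B`. -/
def posi {Ω : Type v} (B : Set (Gamble Ω)) : Set (Gamble Ω) :=
  {f | ∃ n : ℕ, 0 < n ∧ ∃ (l : Fin n → ℝ) (g : Fin n → Gamble Ω),
    (∀ i, 0 < l i) ∧ (∀ i, g i ∈ B) ∧ f = ∑ i, l i • g i}

/-- Natural extension of a set of gambles. -/
def desext {Ω : Type v} (E : Set (Gamble Ω)) : Set (Gamble Ω) := posi (E ∪ Gpos Ω)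

/-- Coherence for a set of desirable gambles. -/
def CoherentD {Ω : Type v} (D : Set (Gamble Ω)) : Prop :=
  (0 : Gamble Ω) ∉ D ∧ Gpos Ω ⊆ D ∧
  (∀ g ∈ D, ∀ l : ℝ, 0 < l → l • g ∈ D) ∧
  (∀ f ∈ D, ∀ g ∈ D, f + g ∈ D)

/-- Coherence for a set of desirable gamble sets. -/
def CoherentK {Ω : Type v} (K : Set (Set (Gamble Ω))) : Prop :=
  (∅ : Set (Gamble Ω)) ∉ K ∧
  (∀ A ∈ K, A \ {0} ∈ K) ∧
  (∀ g ∈ Gpos Ω, ({g} : Set (Gamble Ω)) ∈ K) ∧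
  (∀ A ∈ K, ∀ B : Set (Gamble Ω), A ⊆ B → B ∈ K) ∧
  (∀ A ∈ K, ∀ F : Gamble Ω → Gamble Ω, (∀ g ∈ A, gle g (F g)) → F '' A ∈ K) ∧
  (∀ n : ℕ, 0 < n → ∀ A : Fin n → Set (Gamble Ω), (∀ i, A i ∈ K) →
    ∀ F : (Fin n → Gamble Ω) → Gamble Ω,
    (∀ g : Fin n → Gamble Ω, (∀ i, g i ∈ A i) → F g ∈ posi (Set.range g)) →
    {b | ∃ g : Fin n → Gamble Ω, (∀ i, g i ∈ A i) ∧ b = F g} ∈ K)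

/-- The infinite addition axiom. -/
def KAddInf {Ω : Type v} (K : Set (Set (Gamble Ω))) : Prop :=
  ∀ (I : Type v) (A : I → Set (Gamble Ω)), (∀ i, A i ∈ K) →
    ∀ F : (I → Gamble Ω) → Gamble Ω,
    (∀ g : I → Gamble Ω, (∀ i, g i ∈ A i) → F g ∈ posi (Set.range g)) →
    {b | ∃ g : I → Gamble Ω, (∀ i, g i ∈ A i) ∧ b = F g} ∈ K

/-- Natural extension of a set of gamble sets (nonempty case). -/
def ExtK {Ω : Type v} (𝒜 : Set (Set (Gamble Ω))) : Set (Set (Gamble Ω)) :=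
  {B | ∃ n : ℕ, 0 < n ∧ ∃ A : Fin n → Set (Gamble Ω), (∀ i, A i ∈ 𝒜) ∧
    ∀ g : Fin n → Gamble Ω, (∀ i, g i ∈ A i) →
      (0 : Gamble Ω) ∉ desext (Set.range g) → ∃ f ∈ B, f ∈ desext (Set.range g)}

section Aux

variable {Ω : Type v}

lemma sum_mem_of_cone {B D : Set (Gamble Ω)} (hBD : B ⊆ D)
    (hadd : ∀ f ∈ D, ∀ g ∈ D, f + g ∈ D)
    (hsmul : ∀ g ∈ D, ∀ l : ℝ, 0 < l → l • g ∈ D) :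
    ∀ n : ℕ, ∀ l : Fin (n + 1) → ℝ, ∀ g : Fin (n + 1) → Gamble Ω,
      (∀ i, 0 < l i) → (∀ i, g i ∈ B) → (∑ i, l i • g i) ∈ D := by
  intro n
  induction n with
  | zero =>
    intro l g hl hg
    simpa using hsmul _ (hBD (hg 0)) _ (hl 0)
  | succ n ih =>
    intro l g hl hg
    rw [Fin.sum_univ_castSucc]
    exact hadd _ (ih (fun i => l i.castSucc) (fun i => g i.castSucc)
      (fun i => hl _) (fun i => hg _)) _ (hsmul _ (hBD (hg (Fin.last _))) _ (hl _))

lemma posi_subset_of_cone {B D : Set (Gamble Ω)} (hBD : B ⊆ D)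
    (hadd : ∀ f ∈ D, ∀ g ∈ D, f + g ∈ D)
    (hsmul : ∀ g ∈ D, ∀ l : ℝ, 0 < l → l • g ∈ D) :
    posi B ⊆ D := by
  rintro f ⟨n, hn, l, g, hl, hg, rfl⟩
  obtain ⟨n, rfl⟩ : ∃ k, n = k + 1 := ⟨n - 1, by omega⟩
  exact sum_mem_of_cone hBD hadd hsmul n l g hl hg

lemma mem_posi_self {B : Set (Gamble Ω)} {g : Gamble Ω} (hg : g ∈ B) : g ∈ posi B :=
  ⟨1, one_pos, fun _ => 1, fun _ => g, fun _ => one_pos, fun _ => hg, by simp⟩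

lemma posi_mono {B C : Set (Gamble Ω)} (h : B ⊆ C) : posi B ⊆ posi C := by
  rintro f ⟨n, hn, l, g, hl, hg, rfl⟩
  exact ⟨n, hn, l, g, hl, fun i => h (hg i), rfl⟩

lemma desext_mono {B C : Set (Gamble Ω)} (h : B ⊆ C) : desext B ⊆ desext C :=
  posi_mono (Set.union_subset_union_left _ h)

lemma posi_add {B : Set (Gamble Ω)} {f g : Gamble Ω} (hf : f ∈ posi B) (hg : g ∈ posi B) :
    f + g ∈ posi B := by
  obtain ⟨n, hn, l, u, hl, hu, rfl⟩ := hf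
  obtain ⟨m, hm, k, v, hk, hv, rfl⟩ := hg
  refine ⟨n + m, by omega, Fin.append l k, Fin.append u v, ?_, ?_, ?_⟩
  · intro i
    exact Fin.addCases (fun j => by simpa using hl j)
      (fun j => by simpa using hk j) i
  · intro i
    exact Fin.addCases (fun j : Fin n => by simpa using hu j)
      (fun j : Fin m => by simpa using hv j) i
  · rw [Fin.sum_univ_add]
    simp [Fin.append_left, Fin.append_right]

lemma posi_smul {B : Set (Gamble Ω)} {g : Gamble Ω} (hg : g ∈ posi B) {l : ℝ} (hl : 0 < l) :
    l • g ∈ posi B := by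
  obtain ⟨n, hn, k, u, hk, hu, rfl⟩ := hg
  refine ⟨n, hn, fun i => l * k i, u, fun i => mul_pos hl (hk i), hu, ?_⟩
  rw [Finset.smul_sum]
  simp [smul_smul]

lemma desext_add {S : Set (Gamble Ω)} {f g : Gamble Ω} (hf : f ∈ desext S)
    (hg : g ∈ desext S) : f + g ∈ desext S := posi_add hf hg

lemma desext_smul {S : Set (Gamble Ω)} {g : Gamble Ω} (hg : g ∈ desext S) {l : ℝ}
    (hl : 0 < l) : l • g ∈ desext S := posi_smul hg hl

lemma gpos_mem_desext {S : Set (Gamble Ω)} {g : Gamble Ω} (hg : g ∈ Gpos Ω) :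
    g ∈ desext S := mem_posi_self (Set.mem_union_right _ hg)

lemma desext_upward {S : Set (Gamble Ω)} {f h : Gamble Ω} (hf : f ∈ desext S)
    (hfh : gle f h) : h ∈ desext S := by
  rcases eq_or_ne h f with rfl | hne
  · exact hf
  · have hsub : h - f ∈ Gpos Ω := by
      constructor
      · intro ω
        have := hfh ω
        simp only [AddSubgroupClass.coe_sub, Pi.sub_apply, ZeroMemClass.coe_zero,
          Pi.zero_apply]
        linarith
      · exact sub_ne_zero.mpr hne
    have : f + (h - f) ∈ desext S := desext_add hf (gpos_mem_desext hsub)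
    simpa using this

end Aux

theorem stmt7 {Ω : Type v} [Nonempty Ω] (𝒜 : Set (Set (Gamble Ω)))
    (h𝒜 : 𝒜.Nonempty) (h : (∅ : Set (Gamble Ω)) ∉ ExtK 𝒜) :
    CoherentK (ExtK 𝒜) := by
  obtain ⟨A₀, hA₀⟩ := h𝒜
  refine ⟨h, ?_, ?_, ?_, ?_, ?_⟩
  · -- A \ {0}
    rintro A ⟨n, hn, A', hA', hprop⟩
    refine ⟨n, hn, A', hA', fun g hg h0 => ?_⟩
    obtain ⟨f, hfA, hfd⟩ := hprop g hg h0
    refine ⟨f, ⟨hfA, ?_⟩, hfd⟩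
    simp only [Set.mem_singleton_iff]
    rintro rfl
    exact h0 hfd
  · -- Gpos singletons
    intro g hg
    refine ⟨1, one_pos, fun _ => A₀, fun _ => hA₀, fun g' _ _ => ?_⟩
    exact ⟨g, rfl, gpos_mem_desext hg⟩
  · -- supersets
    rintro A ⟨n, hn, A', hA', hprop⟩ B hAB
    refine ⟨n, hn, A', hA', fun g hg h0 => ?_⟩
    obtain ⟨f, hfA, hfd⟩ := hprop g hg h0
    exact ⟨f, hAB hfA, hfd⟩
  · -- monotonicity
    rintro A ⟨n, hn, A', hA', hprop⟩ F hF
    refine ⟨n, hn, A', hA', fun g hg h0 => ?_⟩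
    obtain ⟨f, hfA, hfd⟩ := hprop g hg h0
    exact ⟨F f, Set.mem_image_of_mem _ hfA, desext_upward hfd (hF f hfA)⟩
  · -- KAdd
    intro n hn A hA F hF
    choose m hm B hB hprop using hA
    set σ := Σ i : Fin n, Fin (m i) with hσ
    have : Nonempty σ := by
      have hn' : Nonempty (Fin n) := Fin.pos_iff_nonempty.mp hn
      obtain ⟨i⟩ := hn'
      exact ⟨⟨i, (Fin.pos_iff_nonempty.mp (hm i)).some⟩⟩
    set N := Fintype.card σ with hN
    have hNpos : 0 < N := Fintype.card_pos
    set e : σ ≃ Fin N := Fintype.equivFin σ with he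
    refine ⟨N, hNpos, fun j => B (e.symm j).1 (e.symm j).2, fun j => hB _ _, ?_⟩
    intro g hg h0
    -- for each i, restrict g to block i
    have key : ∀ i : Fin n, ∃ f ∈ A i, f ∈ desext (Set.range g) := by
      intro i
      set gi : Fin (m i) → Gamble Ω := fun k => g (e ⟨i, k⟩) with hgi
      have hgiB : ∀ k, gi k ∈ B i k := by
        intro k
        have h3 : g (e ⟨i, k⟩) ∈ B (e.symm (e ⟨i, k⟩)).1 (e.symm (e ⟨i, k⟩)).2 :=
          hg (e ⟨i, k⟩)
        rw [show e.symm (e ⟨i, k⟩) = (⟨i, k⟩ : σ) from e.symm_apply_apply _] at h3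
        exact h3
      have hsub : Set.range gi ⊆ Set.range g := by
        rintro _ ⟨k, rfl⟩; exact ⟨e ⟨i, k⟩, rfl⟩
      have h0i : (0 : Gamble Ω) ∉ desext (Set.range gi) :=
        fun hmem => h0 (desext_mono hsub hmem)
      obtain ⟨f, hfA, hfd⟩ := hprop i gi hgiB h0i
      exact ⟨f, hfA, desext_mono hsub hfd⟩
    choose f hfA hfd using key
    refine ⟨F f, ⟨f, hfA, rfl⟩, ?_⟩
    have hFf : F f ∈ posi (Set.range f) := hF f hfA
    have hrange : Set.range f ⊆ desext (Set.range g) := by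
      rintro _ ⟨i, rfl⟩; exact hfd i
    exact posi_subset_of_cone hrange (fun a ha b hb => desext_add ha hb)
      (fun a ha l hl => desext_smul ha hl) hFf
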